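/- For every real ε ∈ (0,1) and all integers s, t ≥ 2, there exists a set A of st positive integers and a real number x such that the open interval (x, x + (3 − ε)·max A) contains at most s + t distinct integers that are multiples of some element of A. -/

import Mathlib

/-- General CRT: given finitely many pairwise coprime moduli and arbitrary residues,
there is a simultaneous solution. -/
lemma exists_crt {ι : Type*} [DecidableEq ι] (n : ι → ℕ) (r : ι → ℤ) :
    ∀ (F : Finset ι), (∀ p ∈ F, ∀ q ∈ F, p ≠ q → Nat.Coprime (n p) (n q)) →
    ∃ w : ℤ, ∀ p ∈ F, (n p : ℤ) ∣ w - r p := by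
  intro F
  induction F using Finset.induction_on with
  | empty => exact fun _ => ⟨0, by simp⟩
  | @insert a F ha ih =>
    intro h
    obtain ⟨w, hw⟩ := ih (fun p hp q hq hpq =>
      h p (Finset.mem_insert_of_mem hp) q (Finset.mem_insert_of_mem hq) hpq)
    have hcop : Nat.Coprime (n a) (∏ p ∈ F, n p) :=
      Nat.Coprime.prod_right fun p hp =>
        h a (Finset.mem_insert_self _ _) p (Finset.mem_insert_of_mem hp)
          (by rintro rfl; exact ha hp)
    have hic : IsCoprime (n a : ℤ) ((∏ p ∈ F, n p : ℕ) : ℤ) :=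
      Nat.isCoprime_iff_coprime.mpr hcop
    obtain ⟨u, v, huv⟩ := hic
    refine ⟨w + (r a - w) * (v * ((∏ p ∈ F, n p : ℕ) : ℤ)), ?_⟩
    intro p hp
    rcases Finset.mem_insert.mp hp with rfl | hp
    · exact ⟨(r p - w) * (-u), by linear_combination (r p - w) * huv⟩
    · have h1 : (n p : ℤ) ∣ w - r p := hw p hp
      have h2 : (n p : ℤ) ∣ ((∏ q ∈ F, n q : ℕ) : ℤ) := by
        exact_mod_cast Int.natCast_dvd_natCast.mpr (Finset.dvd_prod_of_mem n hp)
      have : w + (r a - w) * (v * ((∏ q ∈ F, n q : ℕ) : ℤ)) - r p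
          = (w - r p) + ((r a - w) * v) * ((∏ q ∈ F, n q : ℕ) : ℤ) := by ring
      rw [this]
      exact dvd_add h1 (Dvd.dvd.mul_left h2 _)

/-- For every `ε ∈ (0,1)` and integers `s, t ≥ 2`, there is a set `A` of `st` positive
integers and a real `x` such that `(x, x + (3 - ε) * max A)` contains at most `s + t`
distinct integers that are multiples of some element of `A`. -/
theorem upper_bound_3_eps (ε : ℝ) (hε0 : 0 < ε) (hε1 : ε < 1)
    (s t : ℕ) (hs : 2 ≤ s) (ht : 2 ≤ t) :
    ∃ (A : Finset ℕ) (x : ℝ), A.card = s * t ∧ (∀ a ∈ A, 0 < a) ∧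
      ∃ T : Finset ℤ, T.card ≤ s + t ∧
        ∀ b : ℤ, x < (b : ℝ) → (b : ℝ) < x + (3 - ε) * (A.sup id : ℕ) →
          (∃ a ∈ A, (a : ℤ) ∣ b) → b ∈ T := by
  classical
  set S : ℕ := s + 1 with hS_def
  set B : ℕ := s + t * S with hB_def
  set Q : ℕ := B.factorial with hQ_def
  have hQpos : 0 < Q := Nat.factorial_pos B
  set K : ℕ := ⌈(4 * B : ℝ) / ε⌉₊ + 1 with hK_def
  set M : ℕ := 1 + K * Q with hM_def
  set F : Finset (ℕ × ℕ) := Finset.Icc 1 s ×ˢ Finset.Icc 1 t with hF_def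
  set fa : ℕ × ℕ → ℕ := fun p => M + (p.1 + p.2 * S) * Q with hfa_def
  -- membership facts
  have hmemF : ∀ p ∈ F, 1 ≤ p.1 ∧ p.1 ≤ s ∧ 1 ≤ p.2 ∧ p.2 ≤ t := by
    intro p hp
    rw [hF_def, Finset.mem_product, Finset.mem_Icc, Finset.mem_Icc] at hp
    exact ⟨hp.1.1, hp.1.2, hp.2.1, hp.2.2⟩
  -- grid injectivity
  have grid : ∀ i i' j j' : ℕ, i ≤ s → i' ≤ s →
      i + j * S = i' + j' * S → i = i' ∧ j = j' := by
    intro i i' j j' hi hi' h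
    have hS : s < S := Nat.lt_succ_self s
    have hj : j = j' := by
      rcases lt_trichotomy j j' with hj | hj | hj
      · exfalso
        have : i + j * S < i' + j' * S := by
          calc i + j * S < S + j * S := by omega
          _ = (j + 1) * S := by ring
          _ ≤ j' * S := Nat.mul_le_mul_right _ hj
          _ ≤ i' + j' * S := Nat.le_add_left _ _
        omega
      · exact hj
      · exfalso
        have : i' + j' * S < i + j * S := by
          calc i' + j' * S < S + j' * S := by omega
          _ = (j' + 1) * S := by ring
          _ ≤ j * S := Nat.mul_le_mul_right _ hj
          _ ≤ i + j * S := Nat.le_add_left _ _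
        omega
    subst hj
    exact ⟨by omega, rfl⟩
  have hinj : ∀ p ∈ F, ∀ q ∈ F, fa p = fa q → p = q := by
    intro p hp q hq h
    obtain ⟨hp1, hp2, hp3, hp4⟩ := hmemF p hp
    obtain ⟨hq1, hq2, hq3, hq4⟩ := hmemF q hq
    have hn : p.1 + p.2 * S = q.1 + q.2 * S := by
      have := h
      rw [hfa_def] at this
      simp only at this
      have h2 : (p.1 + p.2 * S) * Q = (q.1 + q.2 * S) * Q := by omega
      exact Nat.eq_of_mul_eq_mul_right hQpos h2
    obtain ⟨h1, h2⟩ := grid p.1 q.1 p.2 q.2 hp2 hq2 hn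
    exact Prod.ext h1 h2
  -- coprimality
  have hcop : ∀ p ∈ F, ∀ q ∈ F, p ≠ q → Nat.Coprime (fa p) (fa q) := by
    intro p hp q hq hne
    obtain ⟨hp1, hp2, hp3, hp4⟩ := hmemF p hp
    obtain ⟨hq1, hq2, hq3, hq4⟩ := hmemF q hq
    by_contra hg
    obtain ⟨pp, hpp, hdvd⟩ := Nat.exists_prime_and_dvd hg
    have h1 : pp ∣ fa p := hdvd.trans (Nat.gcd_dvd_left _ _)
    have h2 : pp ∣ fa q := hdvd.trans (Nat.gcd_dvd_right _ _)
    -- pp divides Q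
    have hppQ : pp ∣ Q := by
      have hd : (pp : ℤ) ∣ (((p.1 + p.2 * S : ℕ) : ℤ) - ((q.1 + q.2 * S : ℕ) : ℤ)) * Q := by
        have heq : ((fa p : ℤ)) - (fa q : ℤ)
            = (((p.1 + p.2 * S : ℕ) : ℤ) - ((q.1 + q.2 * S : ℕ) : ℤ)) * Q := by
          rw [hfa_def]; push_cast; ring
        rw [← heq]
        exact dvd_sub (Int.natCast_dvd_natCast.mpr h1) (Int.natCast_dvd_natCast.mpr h2)
      have hprimeZ : Prime (pp : ℤ) := Nat.prime_iff_prime_int.mp hpp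
      rcases hprimeZ.dvd_mul.mp hd with hcase | hcase
      · -- pp ≤ B, so pp ∣ B!
        have hne' : ((p.1 + p.2 * S : ℕ) : ℤ) - ((q.1 + q.2 * S : ℕ) : ℤ) ≠ 0 := by
          intro h0
          have : p.1 + p.2 * S = q.1 + q.2 * S := by exact_mod_cast sub_eq_zero.mp h0
          obtain ⟨e1, e2⟩ := grid p.1 q.1 p.2 q.2 hp2 hq2 this
          exact hne (Prod.ext e1 e2)
        have hb1 : p.1 + p.2 * S ≤ B := by
          have : p.2 * S ≤ t * S := Nat.mul_le_mul_right _ hp4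
          omega
        have hb2 : q.1 + q.2 * S ≤ B := by
          have : q.2 * S ≤ t * S := Nat.mul_le_mul_right _ hq4
          omega
        have hleB : pp ≤ B := by
          have hdn : (pp : ℤ) ∣ (((p.1 + p.2 * S : ℕ) : ℤ) - ((q.1 + q.2 * S : ℕ) : ℤ)) := hcase
          have h5 := Int.le_of_dvd (abs_pos.mpr hne') ((dvd_abs _ _).mpr hdn)
          have hb1' : ((p.1 + p.2 * S : ℕ) : ℤ) ≤ (B : ℤ) := by exact_mod_cast hb1
          have hb2' : ((q.1 + q.2 * S : ℕ) : ℤ) ≤ (B : ℤ) := by exact_mod_cast hb2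
          have hnn1 : (0 : ℤ) ≤ ((p.1 + p.2 * S : ℕ) : ℤ) := Int.natCast_nonneg _
          have hnn2 : (0 : ℤ) ≤ ((q.1 + q.2 * S : ℕ) : ℤ) := Int.natCast_nonneg _
          have habs : |((p.1 + p.2 * S : ℕ) : ℤ) - ((q.1 + q.2 * S : ℕ) : ℤ)| ≤ (B : ℤ) := by
            rw [abs_le]; omega
          have : (pp : ℤ) ≤ (B : ℤ) := le_trans h5 habs
          exact_mod_cast this
        exact (Nat.dvd_factorial hpp.pos hleB)
      · exact_mod_cast hcase
    -- contradiction: fa p ≡ 1 mod pp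
    have hform : fa p = 1 + (K + (p.1 + p.2 * S)) * Q := by
      rw [hfa_def, hM_def]; ring
    have h3 : pp ∣ (K + (p.1 + p.2 * S)) * Q := Dvd.dvd.mul_left hppQ _
    have h4 : pp ∣ 1 := by
      have := h1
      rw [hform] at this
      exact (Nat.dvd_add_right h3).mp (by rwa [Nat.add_comm] at this)
    exact Nat.Prime.one_lt hpp |>.ne' (Nat.dvd_one.mp h4)
  -- CRT point
  obtain ⟨w, hw⟩ := exists_crt fa (fun p => (p.1 : ℤ) * Q) F hcop
  -- the set A
  refine ⟨F.image fa, (w : ℝ) - M, ?_, ?_, ?_⟩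
  · rw [Finset.card_image_of_injOn hinj, hF_def, Finset.card_product]
    simp [Nat.card_Icc]
  · intro a ha
    obtain ⟨p, hp, rfl⟩ := Finset.mem_image.mp ha
    have : 0 < M := by positivity
    simp only [hfa_def]
    omega
  · refine ⟨(Finset.Icc 1 s).image (fun i : ℕ => w - (i : ℤ) * Q) ∪
      (Finset.Icc 1 t).image (fun j : ℕ => w + M + (j : ℤ) * S * Q), ?_, ?_⟩
    · calc _ ≤ ((Finset.Icc 1 s).image (fun i : ℕ => w - (i : ℤ) * Q)).card
          + ((Finset.Icc 1 t).image (fun j : ℕ => w + M + (j : ℤ) * S * Q)).card :=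
            Finset.card_union_le _ _
      _ ≤ (Finset.Icc 1 s).card + (Finset.Icc 1 t).card :=
            Nat.add_le_add (Finset.card_image_le) (Finset.card_image_le)
      _ ≤ s + t := by simp [Nat.card_Icc]
    · intro b hb1 hb2 ⟨av, hav, hdvd⟩
      obtain ⟨p, hpF, rfl⟩ := Finset.mem_image.mp hav
      obtain ⟨hp1, hp2, hp3, hp4⟩ := hmemF p hpF
      -- sup bound
      have hsup : ((F.image fa).sup id : ℕ) ≤ M + B * Q := by
        apply Finset.sup_le
        intro a ha
        obtain ⟨q, hq, rfl⟩ := Finset.mem_image.mp ha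
        obtain ⟨hq1, hq2, hq3, hq4⟩ := hmemF q hq
        simp only [hfa_def, id]
        have h1 : q.1 + q.2 * S ≤ B := by
          have : q.2 * S ≤ t * S := Nat.mul_le_mul_right _ hq4
          omega
        exact Nat.add_le_add_left (Nat.mul_le_mul_right _ h1) M
      -- key real inequalities
      have hKge : (4 * B : ℝ) / ε ≤ K := by
        rw [hK_def]
        push_cast
        have := Nat.le_ceil ((4 * B : ℝ) / ε)
        linarith
      have hεK : 4 * (B : ℝ) ≤ ε * K := by
        rw [div_le_iff₀ hε0] at hKge
        linarith [hKge]
      have hεM : 3 * (B : ℝ) * Q ≤ ε * M := by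
        have hQ1 : (1 : ℝ) ≤ Q := by exact_mod_cast hQpos
        have hB1 : (1 : ℝ) ≤ B := by
          have : 1 ≤ B := by
            have : 0 ≤ t * S := Nat.zero_le _
            omega
          exact_mod_cast this
        have hM_eq : (M : ℝ) = 1 + K * Q := by rw [hM_def]; push_cast; ring
        rw [hM_eq]
        have hBQ : (0:ℝ) ≤ (B:ℝ) * Q := by positivity
        have h6 : 4 * (B:ℝ) * (Q:ℝ) ≤ ε * K * Q := by
          have := mul_le_mul_of_nonneg_right hεK (by positivity : (0:ℝ) ≤ (Q:ℝ))
          linarith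
        nlinarith [hε0.le, hBQ, h6]
      -- divisibility
      have hdw : (fa p : ℤ) ∣ w - (p.1 : ℤ) * Q := hw p hpF
      have hdb : (fa p : ℤ) ∣ b - (w - (p.1 : ℤ) * Q) := dvd_sub hdvd hdw
      obtain ⟨k, hk⟩ := hdb
      -- real form of fa p
      have hfaR : (fa p : ℝ) = (M : ℝ) + ((p.1 : ℝ) + (p.2 : ℝ) * S) * Q := by
        rw [hfa_def]; push_cast; ring
      have hfapos : (0 : ℝ) < (fa p : ℝ) := by
        have : 0 < fa p := by
          simp only [hfa_def]; positivity
        exact_mod_cast this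
      -- cast hk to ℝ
      have hkR : (b : ℝ) - ((w : ℝ) - (p.1 : ℝ) * Q) = (fa p : ℝ) * (k : ℝ) := by
        exact_mod_cast congrArg (fun z : ℤ => (z : ℝ)) hk
      -- lower bound: k > -1
      have hklow : (-1 : ℝ) < (k : ℝ) := by
        have h1 : (b : ℝ) > (w : ℝ) - M := hb1
        have h2 : (fa p : ℝ) * (k : ℝ) > (p.1 : ℝ) * Q - M := by
          rw [← hkR]; linarith
        have h3 : (p.1 : ℝ) * Q - M ≥ -(fa p : ℝ) := by
          rw [hfaR]
          have : (0:ℝ) ≤ (p.1 : ℝ) * Q := by positivity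
          have h5 : (0:ℝ) ≤ ((p.1 : ℝ) + (p.2 : ℝ) * S) * Q := by positivity
          linarith
        have h6 : (fa p : ℝ) * (-1) < (fa p : ℝ) * (k : ℝ) := by linarith
        exact (mul_lt_mul_iff_right₀ hfapos).mp h6
      -- upper bound: k < 2
      have hkup : (k : ℝ) < 2 := by
        have hsupR : ((((F.image fa).sup id : ℕ)) : ℝ) ≤ (M : ℝ) + B * Q := by
          exact_mod_cast hsup
        have h3ε : (0 : ℝ) < 3 - ε := by linarith
        have h1 : (b : ℝ) < (w : ℝ) - M + (3 - ε) * ((M : ℝ) + B * Q) := by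
          calc (b : ℝ) < (w : ℝ) - M + (3 - ε) * ((F.image fa).sup id : ℕ) := hb2
          _ ≤ (w : ℝ) - M + (3 - ε) * ((M : ℝ) + B * Q) := by
              have := mul_le_mul_of_nonneg_left hsupR h3ε.le
              linarith
        have h2 : (fa p : ℝ) * (k : ℝ) < (p.1 : ℝ) * Q - M + (3 - ε) * ((M : ℝ) + B * Q) := by
          rw [← hkR]; linarith
        -- show rhs ≤ 2 * fa p
        have h3 : (p.1 : ℝ) * Q - M + (3 - ε) * ((M : ℝ) + B * Q) ≤ 2 * (fa p : ℝ) := by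
          rw [hfaR]
          have f1 : (3 - ε) * ((M : ℝ) + (B:ℝ) * Q)
              = 3 * (M:ℝ) + 3 * ((B:ℝ) * Q) - ε * M - ε * ((B:ℝ) * Q) := by ring
          have f2 : 3 * ((B:ℝ) * Q) ≤ ε * M := by linarith [hεM]
          have f3 : (0:ℝ) ≤ ε * ((B:ℝ) * Q) := by positivity
          have f4 : (0:ℝ) ≤ (p.1 : ℝ) * Q := by positivity
          have f5 : (0:ℝ) ≤ (p.2 : ℝ) * (S:ℝ) * Q := by positivity
          linarith [f1, f2, f3, f4, f5]
        have h7 : (fa p : ℝ) * (k : ℝ) < (fa p : ℝ) * 2 := by linarith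
        exact (mul_lt_mul_iff_right₀ hfapos).mp h7
      -- conclude k = 0 or 1
      have hkZ : (-1 : ℤ) < k ∧ k < 2 := by
        constructor
        · exact_mod_cast hklow
        · exact_mod_cast hkup
      have hk01 : k = 0 ∨ k = 1 := by omega
      rcases hk01 with rfl | rfl
      · -- b = w - p.1 * Q
        have hbeq : b = w - (p.1 : ℤ) * Q := by
          have := hk
          simp at this
          omega
        apply Finset.mem_union_left
        apply Finset.mem_image.mpr
        exact ⟨p.1, Finset.mem_Icc.mpr ⟨hp1, hp2⟩, hbeq.symm⟩
      · -- b = w + M + p.2 * S * Q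
        have hbeq : b = w + (M : ℤ) + (p.2 : ℤ) * S * Q := by
          have h5 : b = w - (p.1 : ℤ) * Q + (fa p : ℤ) := by omega
          rw [h5, hfa_def]
          push_cast
          ring
        apply Finset.mem_union_right
        apply Finset.mem_image.mpr
        exact ⟨p.2, Finset.mem_Icc.mpr ⟨hp3, hp4⟩, hbeq.symm⟩
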